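/- Let ι be a nonempty finite type, p : ι → ℝ with p i ≥ 0 for all i and ∑ i, p i = 1, L : ι → ℝ, c ∈ [0, 1), and γ₀ ∈ ℝ. Define CVaR_c(L) := ⨅ π : ℝ, (π + (1 - c)⁻¹ * ∑ i, p i * max (L i - π) 0). Then CVaR_c(L) ≤ γ₀ if and only if there exist π ∈ ℝ and u : ι → ℝ such that (∀ i, 0 ≤ u i), (∀ i, L i - π ≤ u i), and π + (1 - c)⁻¹ * ∑ i, p i * u i ≤ γ₀. -/

import Mathlib

open scoped BigOperators

/-- The Conditional Value-at-Risk of a loss `L` at level `c` on a finite probability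
space with weights `p`, via the Rockafellar–Uryasev representation. -/
noncomputable def CVaR {ι : Type*} [Fintype ι] (p : ι → ℝ) (c : ℝ) (L : ι → ℝ) : ℝ :=
  ⨅ π : ℝ, (π + (1 - c)⁻¹ * ∑ i, p i * max (L i - π) 0)

/-- Reformulation of the CVaR constraint `CVaR_c(L) ≤ γ₀` as the finite system of
linear inequalities (4.9)–(4.12) of the paper. -/
theorem cvar_constraint_iff_linear {ι : Type*} [Fintype ι] [Nonempty ι]
    (p : ι → ℝ) (hp : ∀ i, 0 ≤ p i) (hsum : ∑ i, p i = 1)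
    (L : ι → ℝ) (c γ₀ : ℝ) (hc : c ∈ Set.Ico (0 : ℝ) 1) :
    CVaR p c L ≤ γ₀ ↔
      ∃ (π : ℝ) (u : ι → ℝ), (∀ i, 0 ≤ u i) ∧ (∀ i, L i - π ≤ u i) ∧
        π + (1 - c)⁻¹ * ∑ i, p i * u i ≤ γ₀ := by
  obtain ⟨hc0, hc1⟩ := hc
  set f : ℝ → ℝ := fun π => π + (1 - c)⁻¹ * ∑ i, p i * max (L i - π) 0 with hf
  have h1c : (0:ℝ) < 1 - c := by linarith
  have ht0 : (0:ℝ) < (1 - c)⁻¹ := inv_pos.2 h1c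
  have ht1 : (1:ℝ) ≤ (1 - c)⁻¹ := one_le_inv₀ h1c |>.2 (by linarith)
  have hne : (Finset.univ : Finset ι).Nonempty := Finset.univ_nonempty
  set m := Finset.univ.inf' hne L with hm
  set K := Finset.univ.sup' hne L with hK
  obtain ⟨i0, _⟩ := hne
  have hmK : m ≤ K :=
    le_trans (Finset.inf'_le L (Finset.mem_univ i0)) (Finset.le_sup' L (Finset.mem_univ i0))
  have hfK : ∀ π, K ≤ π → f π = π := by
    intro π hπ
    have : ∀ i ∈ Finset.univ, p i * max (L i - π) 0 = 0 := by
      intro i _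
      have hLi : L i ≤ K := Finset.le_sup' L (Finset.mem_univ i)
      rw [max_eq_right (by linarith), mul_zero]
    simp [hf, Finset.sum_congr rfl this]
  have hfm : ∀ π, π ≤ m → f π = π + (1 - c)⁻¹ * ((∑ i, p i * L i) - π) := by
    intro π hπ
    have hsum' : ∑ i, p i * max (L i - π) 0 = (∑ i, p i * L i) - π := by
      have : ∀ i ∈ Finset.univ, p i * max (L i - π) 0 = p i * L i - p i * π := by
        intro i _
        have hLi : m ≤ L i := Finset.inf'_le L (Finset.mem_univ i)
        rw [max_eq_left (by linarith), mul_sub]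
      rw [Finset.sum_congr rfl this, Finset.sum_sub_distrib, ← Finset.sum_mul, hsum, one_mul]
    rw [hf]; simp only [hsum']
  have hcont : Continuous f := by
    apply continuous_id.add
    apply continuous_const.mul
    apply continuous_finset_sum
    intro i _
    exact continuous_const.mul ((continuous_const.sub continuous_id).max continuous_const)
  obtain ⟨π₀, hπ₀mem, hmin⟩ :=
    isCompact_Icc.exists_isMinOn ⟨m, Set.left_mem_Icc.2 hmK⟩ hcont.continuousOn
  have hglobal : ∀ π, f π₀ ≤ f π := by
    intro π
    rcases le_or_gt π m with h | h
    · have h1 : f m ≤ f π := by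
        rw [hfm π h, hfm m le_rfl]
        nlinarith [mul_nonneg (sub_nonneg.2 h) (sub_nonneg.2 ht1)]
      exact le_trans (hmin (Set.left_mem_Icc.2 hmK)) h1
    · rcases le_or_gt K π with h2 | h2
      · have h1 : f K ≤ f π := by rw [hfK π h2, hfK K le_rfl]; exact h2
        exact le_trans (hmin (Set.right_mem_Icc.2 hmK)) h1
      · exact hmin ⟨h.le, h2.le⟩
  have hbdd : BddBelow (Set.range f) := by
    refine ⟨f π₀, ?_⟩
    rintro _ ⟨π, rfl⟩
    exact hglobal π
  constructor
  · intro h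
    have h0 : f π₀ ≤ γ₀ := le_trans (le_ciInf hglobal) h
    exact ⟨π₀, fun i => max (L i - π₀) 0, fun i => le_max_right _ _,
      fun i => le_max_left _ _, h0⟩
  · rintro ⟨π, u, hu0, hu1, hle⟩
    have h1 : f π ≤ π + (1 - c)⁻¹ * ∑ i, p i * u i := by
      apply add_le_add_right
      apply mul_le_mul_of_nonneg_left _ ht0.le
      apply Finset.sum_le_sum
      intro i _
      exact mul_le_mul_of_nonneg_left (max_le (hu1 i) (hu0 i)) (hp i)
    exact le_trans (ciInf_le hbdd π) (le_trans h1 hle)
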